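/- Let H be a digraph with a min-ordering a_1 < ... < a_p, and let E' be the set of pairs (a_i, a_j) such that a_i a_j ∉ A(H), but there exist j' < j with a_i a_{j'} ∈ A(H) and i' < i with a_{i'} a_j ∈ A(H). Then for every pair (a_i, a_j) ∈ E', either a_i has no out-neighbor strictly after a_j in the ordering, or a_j has no in-neighbor strictly after a_i in the ordering. -/
import Mathlib

/-- For a digraph `H` with a min-ordering, every pair `(i,j) ∈ E'` (a non-arc
with an earlier out-neighbor of `i` and an earlier in-neighbor of `j`) satisfies: either
`i` has no out-neighbor strictly after `j`, or `j` has no in-neighbor strictly after `i`. -/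
theorem stmt_1 {V : Type*} [LinearOrder V] (A : V → V → Prop)
    (hmin : ∀ u u' v v', A u v → A u' v' → u < u' → v' < v → A u v')
    (E' : V → V → Prop)
    (hE' : ∀ i j, E' i j ↔ (¬ A i j ∧ (∃ j' < j, A i j') ∧ (∃ i' < i, A i' j))) :
    ∀ i j, E' i j → (∀ t, A i t → ¬ j < t) ∨ (∀ t, A t j → ¬ i < t) := by
  intro i j hij
  obtain ⟨hnA, -, -⟩ := (hE' i j).mp hij
  by_contra h
  push_neg at h
  obtain ⟨⟨t, hAit, hjt⟩, s, hAsj, his⟩ := h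
  exact hnA (hmin i s t j hAit hAsj his hjt)
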